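/- PCKV-UE satisfies ε-local differential privacy with ε = max{ε₂, ε₁ + ln(2/(1 + e^{−ε₂}))}: for any two nonempty key-value sets S₁, S₂ and every output vector y ∈ {1, −1, 0}^{d'}, the output probabilities satisfy P(y | S₁) ≤ e^{ε} · P(y | S₂). Moreover ε ≤ ε₁ + ε₂. -/

import Mathlib

open Finset

/-- Probability that the sampled coordinate (holding value `vk ∈ [−1,1]`)
of PCKV-UE outputs `o ∈ {1, −1, 0}`. -/
noncomputable def ueSampProb (a p vk : ℝ) (o : ℤ) : ℝ :=
  if o = 1 then a * (1 + (2*p - 1) * vk) / 2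
  else if o = -1 then a * (1 - (2*p - 1) * vk) / 2
  else 1 - a

/-- Probability that a non-sampled coordinate of PCKV-UE outputs
`o ∈ {1, −1, 0}`. -/
noncomputable def ueOtherProb (b : ℝ) (o : ℤ) : ℝ :=
  if o = 1 then b / 2 else if o = -1 then b / 2 else 1 - b

/-- Probability that PCKV-UE outputs the vector `y` given that key `k` with
value `vk` was sampled: the coordinates are perturbed independently. -/
noncomputable def ueCondProb (d ℓ : ℕ) (a b p : ℝ) (k : Fin (d + ℓ)) (vk : ℝ)
    (y : Fin (d + ℓ) → ℤ) : ℝ :=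
  ueSampProb a p vk (y k) * ∏ i ∈ univ.erase k, ueOtherProb b (y i)

/-- Total probability `P(y | S)` that PCKV-UE outputs the vector `y` on the
key-value set `S` (key set `K` with values `v`): with probability
`η = |K|/max{|K|, ℓ}` a key is sampled uniformly from `K` (with its value),
and with probability `1 − η` a dummy key is sampled uniformly from
`{d+1, …, d+ℓ}` (with value `0`). -/
noncomputable def ueOutProb (d ℓ : ℕ) (a b p : ℝ) (K : Finset (Fin (d + ℓ)))
    (v : Fin (d + ℓ) → ℝ) (y : Fin (d + ℓ) → ℤ) : ℝ :=
  ((K.card : ℝ) / max (K.card : ℝ) (ℓ : ℝ)) / (K.card : ℝ) *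
      ∑ k ∈ K, ueCondProb d ℓ a b p k (v k) y
    + (1 - (K.card : ℝ) / max (K.card : ℝ) (ℓ : ℝ)) / (ℓ : ℝ) *
      ∑ k ∈ univ.filter (fun k : Fin (d + ℓ) => d ≤ (k : ℕ)),
        ueCondProb d ℓ a b p k 0 y

lemma ue_other_pos {b : ℝ} (hb0 : 0 < b) (hb1 : b ≤ 1/2) (o : ℤ) :
    0 < ueOtherProb b o := by
  unfold ueOtherProb; split_ifs <;> linarith

lemma ue_samp_nonneg {a p v : ℝ} (ha0 : 1/2 ≤ a) (ha1 : a < 1)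
    (hp0 : 1/2 ≤ p) (hp1 : p < 1) (hv : v ∈ Set.Icc (-1 : ℝ) 1) (o : ℤ) :
    0 ≤ ueSampProb a p v o := by
  obtain ⟨hv1, hv2⟩ := hv
  have h1 : (0:ℝ) ≤ (2*p-1)*(1+v) := by nlinarith
  have h2 : (0:ℝ) ≤ (2*p-1)*(1-v) := by nlinarith
  unfold ueSampProb; split_ifs <;> nlinarith

lemma ue_samp_upper {a b p v : ℝ} (ha0 : 1/2 ≤ a) (ha1 : a < 1)
    (hp0 : 1/2 ≤ p) (hp1 : p < 1) (hb0 : 0 < b) (hb1 : b ≤ 1/2)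
    (hv : v ∈ Set.Icc (-1 : ℝ) 1) (o : ℤ) :
    ueSampProb a p v o ≤ (2*a*p/b) * ueOtherProb b o := by
  obtain ⟨hv1, hv2⟩ := hv
  have hb' : b ≠ 0 := ne_of_gt hb0
  unfold ueSampProb ueOtherProb
  have hval : 2*a*p/b * (b/2) = a*p := by field_simp
  split_ifs
  · rw [hval]
    nlinarith [mul_nonneg (mul_nonneg (by linarith : (0:ℝ) ≤ a) (by linarith : (0:ℝ) ≤ 2*p-1)) (by linarith : (0:ℝ) ≤ 1-v)]
  · rw [hval]
    nlinarith [mul_nonneg (mul_nonneg (by linarith : (0:ℝ) ≤ a) (by linarith : (0:ℝ) ≤ 2*p-1)) (by linarith : (0:ℝ) ≤ 1+v)]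
  · rw [div_mul_eq_mul_div, le_div_iff₀ hb0]
    nlinarith [mul_nonneg (mul_nonneg (by linarith : (0:ℝ) ≤ a) (by linarith : (0:ℝ) ≤ 2*p-1)) (by linarith : (0:ℝ) ≤ 1-b)]

lemma ue_samp_lower {a b p v E : ℝ} (ha0 : 1/2 ≤ a) (ha1 : a < 1)
    (hp0 : 1/2 ≤ p) (hp1 : p < 1) (hb0 : 0 < b) (hb1 : b ≤ 1/2)
    (hv : v ∈ Set.Icc (-1 : ℝ) 1)
    (hE1 : p / (1 - p) ≤ E) (hE2 : 2*p*(a*(1-b)/(b*(1-a))) ≤ E) (o : ℤ) :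
    (2*a*p/b) * ueOtherProb b o ≤ E * ueSampProb a p v o := by
  obtain ⟨hv1, hv2⟩ := hv
  have hb' : b ≠ 0 := ne_of_gt hb0
  have h1p : (0:ℝ) < 1 - p := by linarith
  have h1a : (0:ℝ) < 1 - a := by linarith
  unfold ueSampProb ueOtherProb
  split_ifs
  · have hs : 0 ≤ a * (1 + (2*p - 1) * v) / 2 := by
      nlinarith [mul_nonneg (by linarith : (0:ℝ) ≤ 2*p-1) (by linarith : (0:ℝ) ≤ 1+v)]
    calc 2*a*p/b * (b/2) = a*p := by field_simp
      _ ≤ (p/(1-p)) * (a * (1 + (2*p - 1) * v) / 2) := by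
          rw [div_mul_eq_mul_div, le_div_iff₀ h1p]
          nlinarith [mul_nonneg (mul_nonneg (mul_nonneg (by linarith : (0:ℝ) ≤ a) (by linarith : (0:ℝ) ≤ p)) (by linarith : (0:ℝ) ≤ 2*p-1)) (by linarith : (0:ℝ) ≤ 1+v)]
      _ ≤ E * (a * (1 + (2*p - 1) * v) / 2) := mul_le_mul_of_nonneg_right hE1 hs
  · have hs : 0 ≤ a * (1 - (2*p - 1) * v) / 2 := by
      nlinarith [mul_nonneg (by linarith : (0:ℝ) ≤ 2*p-1) (by linarith : (0:ℝ) ≤ 1-v)]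
    calc 2*a*p/b * (b/2) = a*p := by field_simp
      _ ≤ (p/(1-p)) * (a * (1 - (2*p - 1) * v) / 2) := by
          rw [div_mul_eq_mul_div, le_div_iff₀ h1p]
          nlinarith [mul_nonneg (mul_nonneg (mul_nonneg (by linarith : (0:ℝ) ≤ a) (by linarith : (0:ℝ) ≤ p)) (by linarith : (0:ℝ) ≤ 2*p-1)) (by linarith : (0:ℝ) ≤ 1-v)]
      _ ≤ E * (a * (1 - (2*p - 1) * v) / 2) := mul_le_mul_of_nonneg_right hE1 hs
  · calc 2*a*p/b * (1-b) = (2*p*(a*(1-b)/(b*(1-a)))) * (1-a) := by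
          field_simp
      _ ≤ E * (1-a) := mul_le_mul_of_nonneg_right hE2 (le_of_lt h1a)

lemma ue_dummy_card (d ℓ : ℕ) (hℓ : 1 ≤ ℓ) :
    ((univ : Finset (Fin (d+ℓ))).filter (fun k : Fin (d+ℓ) => d ≤ (k:ℕ))).card = ℓ := by
  have hd' : d < d + ℓ := by omega
  have : (univ : Finset (Fin (d+ℓ))).filter (fun k : Fin (d+ℓ) => d ≤ (k:ℕ))
      = Finset.Ici (⟨d, hd'⟩ : Fin (d+ℓ)) := by
    ext k; simp [Fin.le_def]
  rw [this, Fin.card_Ici]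
  simp

lemma ue_out_le (d ℓ : ℕ) (hℓ : 1 ≤ ℓ) (a b p : ℝ) (K : Finset (Fin (d+ℓ)))
    (v : Fin (d+ℓ) → ℝ) (y : Fin (d+ℓ) → ℤ) (hK : K.Nonempty) (C : ℝ)
    (hub : ∀ k ∈ K, ueCondProb d ℓ a b p k (v k) y ≤ C)
    (hub0 : ∀ k ∈ (univ : Finset (Fin (d+ℓ))).filter (fun k : Fin (d+ℓ) => d ≤ (k:ℕ)),
      ueCondProb d ℓ a b p k 0 y ≤ C) :
    ueOutProb d ℓ a b p K v y ≤ C := by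
  have hκ : (1:ℝ) ≤ (K.card : ℝ) := by
    exact_mod_cast Nat.one_le_iff_ne_zero.mpr (Finset.card_ne_zero_of_mem hK.choose_spec)
  have hκ0 : (0:ℝ) < (K.card : ℝ) := by linarith
  have hℓ0 : (0:ℝ) < (ℓ : ℝ) := by exact_mod_cast hℓ
  have hm0 : (0:ℝ) < max (K.card : ℝ) (ℓ : ℝ) := lt_of_lt_of_le hκ0 (le_max_left _ _)
  have hw1 : (0:ℝ) ≤ ((K.card : ℝ) / max (K.card : ℝ) (ℓ : ℝ)) / (K.card : ℝ) := by positivity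
  have hw2 : (0:ℝ) ≤ (1 - (K.card : ℝ) / max (K.card : ℝ) (ℓ : ℝ)) / (ℓ : ℝ) := by
    apply div_nonneg _ (le_of_lt hℓ0)
    have : (K.card : ℝ) / max (K.card : ℝ) (ℓ : ℝ) ≤ 1 :=
      (div_le_one hm0).mpr (le_max_left _ _)
    linarith
  have hsum1 : ∑ k ∈ K, ueCondProb d ℓ a b p k (v k) y ≤ (K.card : ℝ) * C := by
    have := Finset.sum_le_card_nsmul K _ C hub
    simpa [nsmul_eq_mul] using this
  have hsum2 : ∑ k ∈ (univ : Finset (Fin (d+ℓ))).filter (fun k : Fin (d+ℓ) => d ≤ (k:ℕ)),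
      ueCondProb d ℓ a b p k 0 y ≤ (ℓ : ℝ) * C := by
    have := Finset.sum_le_card_nsmul _ _ C hub0
    rw [ue_dummy_card d ℓ hℓ] at this
    simpa [nsmul_eq_mul] using this
  have key : ((K.card : ℝ) / max (K.card : ℝ) (ℓ : ℝ)) / (K.card : ℝ) * ((K.card : ℝ) * C)
      + (1 - (K.card : ℝ) / max (K.card : ℝ) (ℓ : ℝ)) / (ℓ : ℝ) * ((ℓ : ℝ) * C) = C := by
    field_simp
    ring
  unfold ueOutProb
  calc _ ≤ ((K.card : ℝ) / max (K.card : ℝ) (ℓ : ℝ)) / (K.card : ℝ) * ((K.card : ℝ) * C)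
      + (1 - (K.card : ℝ) / max (K.card : ℝ) (ℓ : ℝ)) / (ℓ : ℝ) * ((ℓ : ℝ) * C) :=
      add_le_add (mul_le_mul_of_nonneg_left hsum1 hw1) (mul_le_mul_of_nonneg_left hsum2 hw2)
    _ = C := key

lemma ue_out_ge (d ℓ : ℕ) (hℓ : 1 ≤ ℓ) (a b p : ℝ) (K : Finset (Fin (d+ℓ)))
    (v : Fin (d+ℓ) → ℝ) (y : Fin (d+ℓ) → ℤ) (hK : K.Nonempty) (C : ℝ)
    (hlb : ∀ k ∈ K, C ≤ ueCondProb d ℓ a b p k (v k) y)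
    (hlb0 : ∀ k ∈ (univ : Finset (Fin (d+ℓ))).filter (fun k : Fin (d+ℓ) => d ≤ (k:ℕ)),
      C ≤ ueCondProb d ℓ a b p k 0 y) :
    C ≤ ueOutProb d ℓ a b p K v y := by
  have hκ : (1:ℝ) ≤ (K.card : ℝ) := by
    exact_mod_cast Nat.one_le_iff_ne_zero.mpr (Finset.card_ne_zero_of_mem hK.choose_spec)
  have hκ0 : (0:ℝ) < (K.card : ℝ) := by linarith
  have hℓ0 : (0:ℝ) < (ℓ : ℝ) := by exact_mod_cast hℓ
  have hm0 : (0:ℝ) < max (K.card : ℝ) (ℓ : ℝ) := lt_of_lt_of_le hκ0 (le_max_left _ _)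
  have hw1 : (0:ℝ) ≤ ((K.card : ℝ) / max (K.card : ℝ) (ℓ : ℝ)) / (K.card : ℝ) := by positivity
  have hw2 : (0:ℝ) ≤ (1 - (K.card : ℝ) / max (K.card : ℝ) (ℓ : ℝ)) / (ℓ : ℝ) := by
    apply div_nonneg _ (le_of_lt hℓ0)
    have : (K.card : ℝ) / max (K.card : ℝ) (ℓ : ℝ) ≤ 1 :=
      (div_le_one hm0).mpr (le_max_left _ _)
    linarith
  have hsum1 : (K.card : ℝ) * C ≤ ∑ k ∈ K, ueCondProb d ℓ a b p k (v k) y := by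
    have := Finset.card_nsmul_le_sum K _ C hlb
    simpa [nsmul_eq_mul] using this
  have hsum2 : (ℓ : ℝ) * C ≤ ∑ k ∈ (univ : Finset (Fin (d+ℓ))).filter (fun k : Fin (d+ℓ) => d ≤ (k:ℕ)),
      ueCondProb d ℓ a b p k 0 y := by
    have := Finset.card_nsmul_le_sum _ _ C hlb0
    rw [ue_dummy_card d ℓ hℓ] at this
    simpa [nsmul_eq_mul] using this
  have key : ((K.card : ℝ) / max (K.card : ℝ) (ℓ : ℝ)) / (K.card : ℝ) * ((K.card : ℝ) * C)
      + (1 - (K.card : ℝ) / max (K.card : ℝ) (ℓ : ℝ)) / (ℓ : ℝ) * ((ℓ : ℝ) * C) = C := by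
    field_simp
    ring
  unfold ueOutProb
  calc C = ((K.card : ℝ) / max (K.card : ℝ) (ℓ : ℝ)) / (K.card : ℝ) * ((K.card : ℝ) * C)
      + (1 - (K.card : ℝ) / max (K.card : ℝ) (ℓ : ℝ)) / (ℓ : ℝ) * ((ℓ : ℝ) * C) := key.symm
    _ ≤ _ :=
      add_le_add (mul_le_mul_of_nonneg_left hsum1 hw1) (mul_le_mul_of_nonneg_left hsum2 hw2)

/-- **Budget composition of PCKV-UE.** If the key perturbation probabilities
`a ∈ [1/2, 1)`, `b ∈ (0, 1/2]` and the value perturbation probability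
`p ∈ [1/2, 1)` correspond to budgets `ε₁, ε₂ ≥ 0` via
`e^{ε₁} = a(1−b)/(b(1−a))` and `p = e^{ε₂}/(e^{ε₂}+1)`, then PCKV-UE
satisfies `ε`-LDP with `ε = max{ε₂, ε₁ + ln(2/(1+e^{−ε₂}))}`: for any two
nonempty key-value sets and any output `y ∈ {1, −1, 0}^{d+ℓ}`,
`P(y | S₁) ≤ e^ε · P(y | S₂)`. Moreover `ε ≤ ε₁ + ε₂`. -/
theorem pckv_ue_ldp (d ℓ : ℕ) (hd : 1 ≤ d) (hℓ : 1 ≤ ℓ)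
    (a b p ε₁ ε₂ : ℝ)
    (ha : a ∈ Set.Ico (1/2 : ℝ) 1) (hp : p ∈ Set.Ico (1/2 : ℝ) 1)
    (hb : b ∈ Set.Ioc (0 : ℝ) (1/2))
    (hε₁ : 0 ≤ ε₁) (hε₂ : 0 ≤ ε₂)
    (he1 : Real.exp ε₁ = a * (1 - b) / (b * (1 - a)))
    (he2 : p = Real.exp ε₂ / (Real.exp ε₂ + 1))
    (K₁ K₂ : Finset (Fin (d + ℓ))) (hK₁ : K₁.Nonempty) (hK₂ : K₂.Nonempty)
    (hK₁d : ∀ i ∈ K₁, (i : ℕ) < d) (hK₂d : ∀ i ∈ K₂, (i : ℕ) < d)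
    (v₁ v₂ : Fin (d + ℓ) → ℝ)
    (hv₁ : ∀ i ∈ K₁, v₁ i ∈ Set.Icc (-1 : ℝ) 1)
    (hv₂ : ∀ i ∈ K₂, v₂ i ∈ Set.Icc (-1 : ℝ) 1)
    (y : Fin (d + ℓ) → ℤ) (hy : ∀ i, y i = 1 ∨ y i = -1 ∨ y i = 0) :
    ueOutProb d ℓ a b p K₁ v₁ y
      ≤ Real.exp (max ε₂ (ε₁ + Real.log (2 / (1 + Real.exp (-ε₂))))) *
        ueOutProb d ℓ a b p K₂ v₂ y ∧
    max ε₂ (ε₁ + Real.log (2 / (1 + Real.exp (-ε₂)))) ≤ ε₁ + ε₂ := by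
  obtain ⟨ha0, ha1⟩ := ha
  obtain ⟨hp0, hp1⟩ := hp
  obtain ⟨hb0, hb1⟩ := hb
  have h1p : (0:ℝ) < 1 - p := by linarith
  have h1a : (0:ℝ) < 1 - a := by linarith
  have hppos : (0:ℝ) < p := by linarith
  have hepos : (0:ℝ) < Real.exp ε₂ + 1 := by positivity
  have h1mp : 1 - p = 1 / (Real.exp ε₂ + 1) := by rw [he2]; field_simp; ring
  have hpe : p * (Real.exp ε₂ + 1) = Real.exp ε₂ := by rw [he2]; field_simp
  have hexpε₂ : Real.exp ε₂ = p / (1 - p) := by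
    rw [eq_div_iff (ne_of_gt h1p)]
    nlinarith [hpe]
  have h2p : 2 / (1 + Real.exp (-ε₂)) = 2 * p := by
    rw [Real.exp_neg, hexpε₂]
    rw [inv_div]
    field_simp
    ring
  have h2ppos : (0:ℝ) < 2 / (1 + Real.exp (-ε₂)) := by positivity
  set E := Real.exp (max ε₂ (ε₁ + Real.log (2 / (1 + Real.exp (-ε₂))))) with hEdef
  have hE0 : (0:ℝ) < E := Real.exp_pos _
  have hE1 : p / (1 - p) ≤ E := by
    rw [← hexpε₂]
    exact Real.exp_le_exp.mpr (le_max_left _ _)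
  have hE2 : 2*p*(a*(1-b)/(b*(1-a))) ≤ E := by
    have h : Real.exp ε₁ * (2 / (1 + Real.exp (-ε₂))) ≤ E :=
      calc Real.exp ε₁ * (2 / (1 + Real.exp (-ε₂)))
          = Real.exp (ε₁ + Real.log (2 / (1 + Real.exp (-ε₂)))) := by
            rw [Real.exp_add, Real.exp_log h2ppos]
        _ ≤ E := Real.exp_le_exp.mpr (le_max_right _ _)
    calc 2*p*(a*(1-b)/(b*(1-a))) = Real.exp ε₁ * (2 / (1 + Real.exp (-ε₂))) := by
          rw [he1, h2p]; ring
      _ ≤ E := h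
  -- per-conditional bounds
  have key_ub : ∀ (k : Fin (d+ℓ)) (v : ℝ), v ∈ Set.Icc (-1:ℝ) 1 →
      ueCondProb d ℓ a b p k v y ≤ 2*a*p/b * ∏ i, ueOtherProb b (y i) := by
    intro k v hv
    have h := ue_samp_upper ha0 ha1 hp0 hp1 hb0 hb1 hv (y k)
    have hpe : (0:ℝ) ≤ ∏ i ∈ univ.erase k, ueOtherProb b (y i) :=
      Finset.prod_nonneg fun i _ => (ue_other_pos hb0 hb1 _).le
    unfold ueCondProb
    rw [← Finset.mul_prod_erase univ (fun i => ueOtherProb b (y i)) (mem_univ k),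
      ← mul_assoc]
    exact mul_le_mul_of_nonneg_right h hpe
  have key_lb : ∀ (k : Fin (d+ℓ)) (v : ℝ), v ∈ Set.Icc (-1:ℝ) 1 →
      2*a*p/b * ∏ i, ueOtherProb b (y i) ≤ E * ueCondProb d ℓ a b p k v y := by
    intro k v hv
    have h := ue_samp_lower ha0 ha1 hp0 hp1 hb0 hb1 hv hE1 hE2 (y k)
    have hpe : (0:ℝ) ≤ ∏ i ∈ univ.erase k, ueOtherProb b (y i) :=
      Finset.prod_nonneg fun i _ => (ue_other_pos hb0 hb1 _).le
    unfold ueCondProb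
    rw [← Finset.mul_prod_erase univ (fun i => ueOtherProb b (y i)) (mem_univ k),
      ← mul_assoc, ← mul_assoc]
    exact mul_le_mul_of_nonneg_right h hpe
  have h0mem : (0:ℝ) ∈ Set.Icc (-1:ℝ) 1 := ⟨by norm_num, by norm_num⟩
  have hout1 : ueOutProb d ℓ a b p K₁ v₁ y ≤ 2*a*p/b * ∏ i, ueOtherProb b (y i) :=
    ue_out_le d ℓ hℓ a b p K₁ v₁ y hK₁ _
      (fun k hk => key_ub k _ (hv₁ k hk)) (fun k _ => key_ub k 0 h0mem)
  have hout2 : (2*a*p/b * ∏ i, ueOtherProb b (y i)) / E ≤ ueOutProb d ℓ a b p K₂ v₂ y :=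
    ue_out_ge d ℓ hℓ a b p K₂ v₂ y hK₂ _
      (fun k hk => (div_le_iff₀ hE0).mpr ((key_lb k _ (hv₂ k hk)).trans_eq (mul_comm _ _)))
      (fun k _ => (div_le_iff₀ hE0).mpr ((key_lb k 0 h0mem).trans_eq (mul_comm _ _)))
  constructor
  · have := (div_le_iff₀ hE0).mp hout2
    calc ueOutProb d ℓ a b p K₁ v₁ y ≤ 2*a*p/b * ∏ i, ueOtherProb b (y i) := hout1
      _ ≤ ueOutProb d ℓ a b p K₂ v₂ y * E := this
      _ = E * ueOutProb d ℓ a b p K₂ v₂ y := mul_comm _ _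
  · apply max_le (by linarith)
    have hlog : Real.log (2 / (1 + Real.exp (-ε₂))) ≤ ε₂ := by
      rw [Real.log_le_iff_le_exp h2ppos]
      have h1 : (1:ℝ) ≤ Real.exp ε₂ := Real.one_le_exp hε₂
      have h2 : (0:ℝ) < 1 + Real.exp (-ε₂) := by positivity
      rw [div_le_iff₀ h2]
      have h3 : Real.exp ε₂ * Real.exp (-ε₂) = 1 := by rw [← Real.exp_add]; simp
      nlinarith [Real.exp_pos (-ε₂)]
    linarith
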